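/- Let g : ℝⁿ → ℝ be twice continuously differentiable on a neighborhood of a point x̄, and let f : ℝⁿ → (−∞,∞] be proper, lower semicontinuous, and primal lower nice at x̄. Then the sum f + g is primal lower nice at x̄. -/

import Mathlib

open Filter Topology
open scoped ENNReal NNReal

/-- The slope `|∇f|(x)`: the infimum of all `δ > 0` such that `x` is a local minimizer of
`f + δ·d(·,x)`; it equals `∞` at points where `f x = ⊤`. -/
noncomputable def slopeM {X : Type*} [MetricSpace X] (f : X → EReal) (x : X) : ℝ≥0∞ :=
  if f x = ⊤ then ⊤
  else sInf {δ : ℝ≥0∞ | ∃ c : ℝ, 0 < c ∧ δ = ENNReal.ofReal c ∧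
    ∀ᶠ z in 𝓝 x, f x ≤ f z + ((c * dist z x : ℝ) : EReal)}

/-- The modulus of identifiability: `liminf_{x → xbar, x ∉ M, f(x) → f(xbar)} |∇f|(x)`. -/
noncomputable def identModulus {X : Type*} [MetricSpace X] (f : X → EReal) (M : Set X)
    (xbar : X) : ℝ≥0∞ :=
  Filter.liminf (slopeM f) (𝓝[Mᶜ] xbar ⊓ Filter.comap f (𝓝 (f xbar)))

/-- `M` is an identifiable set for `f` at `xbar`: it is closed, contains `xbar`, and the
modulus of identifiability is strictly positive. -/
def Identifiable {X : Type*} [MetricSpace X] (f : X → EReal) (M : Set X) (xbar : X) : Prop :=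
  IsClosed M ∧ xbar ∈ M ∧ 0 < identModulus f M xbar

/-- `y` is a regular (Fréchet) subgradient of `f` at `x`:
`liminf_{z → x} (f(z) − f(x) − ⟨y, z − x⟩)/‖z − x‖ ≥ 0`. -/
def RegularSubgradient {n : ℕ} (f : EuclideanSpace ℝ (Fin n) → EReal)
    (x y : EuclideanSpace ℝ (Fin n)) : Prop :=
  f x ≠ ⊤ ∧ ∀ ε : ℝ, 0 < ε →
    ∀ᶠ z in 𝓝 x, f x + (((inner ℝ y (z - x) : ℝ) - ε * ‖z - x‖ : ℝ) : EReal) ≤ f z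

/-- The limiting subdifferential `∂f(x)`: all limits of regular subgradients `y_r` at points
`x_r → x` with `f(x_r) → f(x)`. -/
def LimitingSubdiff {n : ℕ} (f : EuclideanSpace ℝ (Fin n) → EReal)
    (x : EuclideanSpace ℝ (Fin n)) : Set (EuclideanSpace ℝ (Fin n)) :=
  {y | f x ≠ ⊤ ∧ ∃ xr yr : ℕ → EuclideanSpace ℝ (Fin n),
    (∀ r, RegularSubgradient f (xr r) (yr r)) ∧
    Tendsto xr atTop (𝓝 x) ∧ Tendsto (fun r => f (xr r)) atTop (𝓝 (f x)) ∧
    Tendsto yr atTop (𝓝 y)}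

/-- `f` is primal lower nice at `xbar`. -/
def PrimalLowerNice {n : ℕ} (f : EuclideanSpace ℝ (Fin n) → EReal)
    (xbar : EuclideanSpace ℝ (Fin n)) : Prop :=
  ∃ (α β : ℝ) (U : Set (EuclideanSpace ℝ (Fin n))), U ∈ 𝓝 xbar ∧
    ∀ x ∈ U, ∀ x' ∈ U, ∀ y ∈ LimitingSubdiff f x,
      f x + (((inner ℝ y (x' - x) : ℝ) - (α + β * ‖y‖) * ‖x' - x‖ ^ 2 : ℝ) : EReal) ≤ f x'

/-- Primal lower nice preservation: adding a function that is twice continuously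
differentiable near `xbar` preserves the primal lower nice property at `xbar`. -/
theorem primalLowerNice_add_smooth {n : ℕ}
    (g : EuclideanSpace ℝ (Fin n) → ℝ) (xbar : EuclideanSpace ℝ (Fin n))
    (hg : ∃ U ∈ 𝓝 xbar, ContDiffOn ℝ 2 g U)
    (f : EuclideanSpace ℝ (Fin n) → EReal)
    (hproper : ∃ z, f z ≠ ⊤) (hlsc : LowerSemicontinuous f) (hbot : ∀ z, f z ≠ ⊥)
    (hpln : PrimalLowerNice f xbar) :
    PrimalLowerNice (fun z => f z + ((g z : ℝ) : EReal)) xbar := by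
  classical
  obtain ⟨U0, hU0, hgC2⟩ := hg
  obtain ⟨α, β, U, hU, hUf⟩ := hpln
  obtain ⟨V, hVU0, hVopen, hxV⟩ := mem_nhds_iff.mp hU0
  have hC2at : ∀ x ∈ V, ContDiffAt ℝ 2 g x := fun x hx =>
    (hgC2.mono hVU0).contDiffAt (hVopen.mem_nhds hx)
  have h1 : ContDiffAt ℝ 1 (fderiv ℝ g) xbar :=
    (hC2at xbar hxV).fderiv_right (le_refl 2)
  obtain ⟨K, t, ht, hLip⟩ := h1.exists_lipschitzOnWith
  obtain ⟨r, hr, hrsub⟩ := Metric.mem_nhds_iff.mp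
    (Filter.inter_mem (Filter.inter_mem (hVopen.mem_nhds hxV) ht) hU)
  set B := Metric.ball xbar r with hB
  have hBV : B ⊆ V := fun z hz => ((hrsub hz).1).1
  have hBt : B ⊆ t := fun z hz => ((hrsub hz).1).2
  have hBU : B ⊆ U := fun z hz => (hrsub hz).2
  have hBopen : IsOpen B := Metric.isOpen_ball
  have hxB : xbar ∈ B := Metric.mem_ball_self hr
  have hdiff : ∀ x ∈ B, DifferentiableAt ℝ g x := fun x hx =>
    (hC2at x (hBV hx)).differentiableAt (by norm_num)
  have hLipB : LipschitzOnWith K (fderiv ℝ g) B := hLip.mono hBt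
  set G : EuclideanSpace ℝ (Fin n) → EuclideanSpace ℝ (Fin n) :=
    fun x => (InnerProductSpace.toDual ℝ (EuclideanSpace ℝ (Fin n))).symm (fderiv ℝ g x) with hG
  have hGinner : ∀ x v, (inner ℝ (G x) v : ℝ) = fderiv ℝ g x v := fun x v =>
    InnerProductSpace.toDual_symm_apply
  have hGsub : ∀ x x', ‖G x - G x'‖ = ‖fderiv ℝ g x - fderiv ℝ g x'‖ := by
    intro x x'
    rw [hG]
    rw [← map_sub]
    exact (InnerProductSpace.toDual ℝ (EuclideanSpace ℝ (Fin n))).symm.norm_map _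
  set Kb : ℝ := ‖fderiv ℝ g xbar‖ + (K : ℝ) * r with hKb
  have hGbound : ∀ x ∈ B, ‖G x‖ ≤ Kb := by
    intro x hx
    have h2 : dist (fderiv ℝ g x) (fderiv ℝ g xbar) ≤ (K : ℝ) * dist x xbar :=
      hLipB.dist_le_mul x hx xbar hxB
    have h3 : dist x xbar ≤ r := le_of_lt (Metric.mem_ball.mp hx)
    have h4 : ‖G x - G xbar‖ ≤ (K : ℝ) * r := by
      rw [hGsub, ← dist_eq_norm]
      calc dist (fderiv ℝ g x) (fderiv ℝ g xbar) ≤ (K : ℝ) * dist x xbar := h2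
        _ ≤ (K : ℝ) * r := by
            exact mul_le_mul_of_nonneg_left h3 K.coe_nonneg
    have h5 : ‖G xbar‖ = ‖fderiv ℝ g xbar‖ :=
      (InnerProductSpace.toDual ℝ (EuclideanSpace ℝ (Fin n))).symm.norm_map _
    calc ‖G x‖ = ‖G xbar + (G x - G xbar)‖ := by congr 1; abel
      _ ≤ ‖G xbar‖ + ‖G x - G xbar‖ := norm_add_le _ _
      _ ≤ Kb := by rw [h5, hKb]; linarith
  have hTaylor : ∀ x ∈ B, ∀ x' ∈ B,
      |g x' - g x - fderiv ℝ g x (x' - x)| ≤ ((K : ℝ) * ‖x' - x‖) * ‖x' - x‖ := by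
    intro x hx x' hx'
    have hseg : segment ℝ x x' ⊆ B := (convex_ball xbar r).segment_subset hx hx'
    have hbound : ∀ z ∈ segment ℝ x x',
        ‖fderiv ℝ g z - fderiv ℝ g x‖ ≤ (K : ℝ) * ‖x' - x‖ := by
      intro z hz
      have h2 : dist (fderiv ℝ g z) (fderiv ℝ g x) ≤ (K : ℝ) * dist z x :=
        hLipB.dist_le_mul z (hseg hz) x hx
      have h3 : dist x z + dist z x' = dist x x' := dist_add_dist_of_mem_segment hz
      have h4 : dist z x ≤ dist x' x := by
        have := dist_nonneg (x := z) (y := x')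
        rw [dist_comm z x, dist_comm x' x]
        linarith
      rw [← dist_eq_norm]
      calc dist (fderiv ℝ g z) (fderiv ℝ g x) ≤ (K : ℝ) * dist z x := h2
        _ ≤ (K : ℝ) * ‖x' - x‖ := by
            rw [dist_eq_norm] at h4
            exact mul_le_mul_of_nonneg_left h4 K.coe_nonneg
    have := (convex_segment x x').norm_image_sub_le_of_norm_fderiv_le'
      (fun z hz => hdiff z (hseg hz)) hbound
      (left_mem_segment ℝ x x') (right_mem_segment ℝ x x')
    simpa [Real.norm_eq_abs] using this
  -- transfer of regular subgradients
  have key1 : ∀ x ∈ B, ∀ y, RegularSubgradient (fun z => f z + ((g z : ℝ) : EReal)) x y →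
      RegularSubgradient f x (y - G x) := by
    intro x hx y hy
    have hfxt : f x ≠ ⊤ := by
      intro h
      apply hy.1
      show f x + ((g x : ℝ) : EReal) = ⊤
      rw [h]; exact EReal.top_add_coe _
    refine ⟨hfxt, ?_⟩
    intro ε hε
    have h1 := hy.2 (ε/2) (by linarith)
    have h2 : ∀ᶠ z in 𝓝 x, ‖g z - g x - fderiv ℝ g x (z - x)‖ ≤ (ε/2) * ‖z - x‖ := by
      have hlo := (hdiff x hx).hasFDerivAt.isLittleO
      exact hlo.def (by linarith)
    obtain ⟨px, hpx⟩ : ∃ p : ℝ, f x = (p : EReal) :=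
      ⟨(f x).toReal, (EReal.coe_toReal hfxt (hbot x)).symm⟩
    filter_upwards [h1, h2] with z h1z h2z
    by_cases hzt : f z = ⊤
    · rw [hzt]; exact le_top
    obtain ⟨pz, hpz⟩ : ∃ p : ℝ, f z = (p : EReal) :=
      ⟨(f z).toReal, (EReal.coe_toReal hzt (hbot z)).symm⟩
    rw [hpx, hpz] at h1z ⊢
    norm_cast at h1z ⊢
    rw [Real.norm_eq_abs, abs_le] at h2z
    have hsplit : (inner ℝ (y - G x) (z - x) : ℝ)
        = (inner ℝ y (z - x) : ℝ) - (inner ℝ (G x) (z - x) : ℝ) := inner_sub_left _ _ _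
    have hGi : (inner ℝ (G x) (z - x) : ℝ) = fderiv ℝ g x (z - x) := hGinner _ _
    have hnn : (0:ℝ) ≤ ‖z - x‖ := norm_nonneg _
    rw [hsplit, hGi]
    linarith [h2z.1, h2z.2]
  -- continuity of G on B
  have hGcont : ∀ x ∈ B, ContinuousAt G x := by
    intro x hx
    have h2 : ContinuousAt (fderiv ℝ g) x :=
      (hLipB.continuousOn.continuousAt (hBopen.mem_nhds hx))
    exact ((InnerProductSpace.toDual ℝ
      (EuclideanSpace ℝ (Fin n))).symm.continuous.continuousAt).comp h2
  -- transfer of limiting subgradients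
  have key2 : ∀ x ∈ B, ∀ y,
      y ∈ LimitingSubdiff (fun z => f z + ((g z : ℝ) : EReal)) x →
      (y - G x) ∈ LimitingSubdiff f x := by
    intro x hx y hy
    obtain ⟨hne, xr, yr, hreg, hxr, hfxr, hyr⟩ := hy
    have hfxt : f x ≠ ⊤ := by
      intro h
      apply hne
      show f x + ((g x : ℝ) : EReal) = ⊤
      rw [h]; exact EReal.top_add_coe _
    obtain ⟨px, hpx⟩ : ∃ p : ℝ, f x = (p : EReal) :=
      ⟨(f x).toReal, (EReal.coe_toReal hfxt (hbot x)).symm⟩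
    have hBmem : ∀ᶠ s in atTop, xr s ∈ B := hxr.eventually (hBopen.mem_nhds hx)
    obtain ⟨N, hN⟩ := Filter.eventually_atTop.mp hBmem
    have hshift : Tendsto (fun s : ℕ => xr (s + N)) atTop (𝓝 x) :=
      hxr.comp (tendsto_add_atTop_nat N)
    refine ⟨hfxt, fun s => xr (s + N), fun s => yr (s + N) - G (xr (s + N)), ?_, hshift, ?_, ?_⟩
    · intro s
      exact key1 _ (hN _ (Nat.le_add_left N s)) _ (hreg _)
    · -- Tendsto (fun s => f (xr (s+N))) atTop (𝓝 (f x))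
      have hcancel : ∀ (a : EReal) (c : ℝ), (a + (c : EReal)) + ((-c : ℝ) : EReal) = a := by
        intro a c
        rw [EReal.coe_neg, ← sub_eq_add_neg]
        exact EReal.add_sub_cancel_right
      have heq : (fun s => f (xr (s + N))) = fun s =>
          ((f (xr (s + N)) + ((g (xr (s + N)) : ℝ) : EReal))
            + (((-(g (xr (s + N)))) : ℝ) : EReal)) := by
        funext s; rw [hcancel]
      rw [heq]
      have hgc : ContinuousAt g x := (hdiff x hx).continuousAt
      have hA : Tendsto (fun s => f (xr (s + N)) + ((g (xr (s + N)) : ℝ) : EReal)) atTop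
          (𝓝 (((px + g x : ℝ)) : EReal)) := by
        have h5 := hfxr.comp (tendsto_add_atTop_nat N)
        have h6 : f x + ((g x : ℝ) : EReal) = (((px + g x : ℝ)) : EReal) := by
          rw [hpx]; norm_cast
        simpa [h6, Function.comp_def] using h5
      have hC : Tendsto (fun s => (((-(g (xr (s + N)))) : ℝ) : EReal)) atTop
          (𝓝 (((-(g x)) : ℝ) : EReal)) := by
        have h7 : Tendsto (fun s => -(g (xr (s + N)))) atTop (𝓝 (-(g x))) :=
          (hgc.tendsto.comp hshift).neg
        exact (continuous_coe_real_ereal.tendsto _).comp h7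
      have hadd := (EReal.continuousAt_add
        (p := ((((px + g x : ℝ)) : EReal), (((-(g x)) : ℝ) : EReal)))
        (Or.inl (EReal.coe_ne_top _)) (Or.inl (EReal.coe_ne_bot _)))
      have h8 := hadd.tendsto.comp (hA.prodMk_nhds hC)
      have h9 : (((px + g x : ℝ)) : EReal) + (((-(g x)) : ℝ) : EReal) = f x := by
        rw [hpx]; norm_cast; ring
      rw [h9] at h8
      exact h8
    · have h10 : Tendsto (fun s => G (xr (s + N))) atTop (𝓝 (G x)) :=
        ((hGcont x hx).tendsto).comp hshift
      exact (hyr.comp (tendsto_add_atTop_nat N)).sub h10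
  -- assemble
  refine ⟨α + |β| * Kb + (K : ℝ), |β|, B, hBopen.mem_nhds hxB, ?_⟩
  intro x hxB' x' hx'B y hy
  have hyf := key2 x hxB' y hy
  have hineq := hUf x (hBU hxB') x' (hBU hx'B) (y - G x) hyf
  have hfxt : f x ≠ ⊤ := hyf.1
  obtain ⟨px, hpx⟩ : ∃ p : ℝ, f x = (p : EReal) :=
    ⟨(f x).toReal, (EReal.coe_toReal hfxt (hbot x)).symm⟩
  beta_reduce
  by_cases hx't : f x' = ⊤
  · rw [hx't, EReal.top_add_coe]
    exact le_top
  obtain ⟨px', hpx'⟩ : ∃ p : ℝ, f x' = (p : EReal) :=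
    ⟨(f x').toReal, (EReal.coe_toReal hx't (hbot x')).symm⟩
  rw [hpx, hpx'] at hineq ⊢
  norm_cast at hineq ⊢
  have htay := hTaylor x hxB' x' hx'B
  rw [abs_le] at htay
  have hnorm : ‖y - G x‖ ≤ ‖y‖ + Kb :=
    le_trans (norm_sub_le _ _) (by linarith [hGbound x hxB'])
  have hsplit : (inner ℝ (y - G x) (x' - x) : ℝ)
      = (inner ℝ y (x' - x) : ℝ) - (inner ℝ (G x) (x' - x) : ℝ) := inner_sub_left _ _ _
  have hGi : (inner ℝ (G x) (x' - x) : ℝ) = fderiv ℝ g x (x' - x) := hGinner _ _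
  have hb1 : β * ‖y - G x‖ ≤ |β| * (‖y‖ + Kb) := by
    calc β * ‖y - G x‖ ≤ |β| * ‖y - G x‖ :=
          mul_le_mul_of_nonneg_right (le_abs_self β) (norm_nonneg _)
      _ ≤ |β| * (‖y‖ + Kb) := mul_le_mul_of_nonneg_left hnorm (abs_nonneg β)
  have hb2 : (α + β * ‖y - G x‖) * ‖x' - x‖ ^ 2 ≤ (α + |β| * (‖y‖ + Kb)) * ‖x' - x‖ ^ 2 :=
    mul_le_mul_of_nonneg_right (by linarith) (sq_nonneg _)
  have hdd : ‖x' - x‖ * ‖x' - x‖ = ‖x' - x‖ ^ 2 := (sq ‖x' - x‖).symm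
  rw [hsplit, hGi] at hineq
  nlinarith [htay.1, htay.2, hineq, hb2, sq_nonneg ‖x' - x‖]
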